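/- Claim inside the pumping lemma: assume ⟦A_max⟧ ≤ ⟦A_min⟧, let c be a context, t a term, P = Prod(c), R = Reach(t), and m a context. Then for every run ρ of A_max over m from p to p with p ∈ P ∩ R, and every run τ of A_min over m from q to q with q ∈ P ∩ R, one has weight(ρ) ≤ weight(τ). -/

import Mathlib

/-- A ranked alphabet: symbols with arities. -/
structure RankedAlphabet where
  symb : Type
  ar : symb → ℕ

/-- Terms (finite ranked trees) over a ranked alphabet. -/
inductive Term (A : RankedAlphabet) : Type where
  | node (a : A.symb) (ts : Fin (A.ar a) → Term A) : Term A

/-- Height of a term: length of the longest branch. -/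
def Term.height {A : RankedAlphabet} : Term A → ℕ
  | .node _ ts => Finset.univ.sup fun i => (ts i).height + 1

/-- Size of a term: number of nodes. -/
def Term.size {A : RankedAlphabet} : Term A → ℕ
  | .node _ ts => 1 + ∑ i, (ts i).size

/-- A nondeterministic tree automaton with real weights on transitions and final states. -/
structure WTA (A : RankedAlphabet) (Q : Type) where
  trans : (a : A.symb) → (Fin (A.ar a) → Q) → Q → Prop
  wt : (a : A.symb) → (Fin (A.ar a) → Q) → Q → ℝ
  final : Q → Prop
  fwt : Q → ℝ

/-- Runs of an automaton over a term, reaching a given state at the root. -/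
inductive RunOf {A : RankedAlphabet} {Q : Type} (M : WTA A Q) : Term A → Q → Type where
  | node (a : A.symb) (ts : Fin (A.ar a) → Term A) (qs : Fin (A.ar a) → Q) (q : Q)
      (hq : M.trans a qs q) (rs : ∀ i, RunOf M (ts i) (qs i)) : RunOf M (.node a ts) q

/-- The weight of a run: sum of the weights of the transitions used. -/
def RunOf.wt {A : RankedAlphabet} {Q : Type} {M : WTA A Q} :
    {t : Term A} → {q : Q} → RunOf M t q → ℝ
  | _, _, .node a _ qs q _ rs => (∑ i, (rs i).wt) + M.wt a qs q

/-- Contexts: terms with exactly one hole. -/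
inductive Ctx (A : RankedAlphabet) : Type where
  | hole : Ctx A
  | node (a : A.symb) (i : Fin (A.ar a)) (c : Ctx A) (ts : Fin (A.ar a) → Term A) : Ctx A

/-- Plugging a term into the hole of a context. -/
def Ctx.plug {A : RankedAlphabet} : Ctx A → Term A → Term A
  | .hole, t => t
  | .node a i c ts, t => .node a (Function.update ts i (c.plug t))

/-- Composition of contexts: plugging the second context into the hole of the first. -/
def Ctx.comp {A : RankedAlphabet} : Ctx A → Ctx A → Ctx A
  | .hole, d => d
  | .node a i c ts, d => .node a i (c.comp d) ts

/-- Iterated composition of a context with itself. -/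
def Ctx.pow {A : RankedAlphabet} (m : Ctx A) : ℕ → Ctx A
  | 0 => .hole
  | n + 1 => m.comp (m.pow n)

/-- Runs over a context, from a state (at the hole) to a state (at the root). -/
inductive CRun {A : RankedAlphabet} {Q : Type} (M : WTA A Q) : Ctx A → Q → Q → Type where
  | hole (p : Q) : CRun M .hole p p
  | node (a : A.symb) (i : Fin (A.ar a)) (c : Ctx A) (ts : Fin (A.ar a) → Term A)
      (qs : Fin (A.ar a) → Q) (p q : Q)
      (hq : M.trans a qs q)
      (hc : CRun M c p (qs i))
      (rs : ∀ j, j ≠ i → RunOf M (ts j) (qs j)) : CRun M (.node a i c ts) p q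

/-- The weight of a run over a context. -/
def CRun.wt {A : RankedAlphabet} {Q : Type} {M : WTA A Q} :
    {c : Ctx A} → {p q : Q} → CRun M c p q → ℝ
  | _, _, _, .hole _ => 0
  | _, _, _, .node a i _ _ qs _ q _ hc rs =>
      (∑ j : {j // j ≠ i}, (rs j.1 j.2).wt) + M.wt a qs q + hc.wt

/-- Gluing a run over a context with a run over a term yields a run over the plugged term. -/
def CRun.glue {A : RankedAlphabet} {Q : Type} {M : WTA A Q} {t : Term A} :
    {c : Ctx A} → {p q : Q} → CRun M c p q → RunOf M t p → RunOf M (c.plug t) q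
  | _, _, _, .hole _, r => r
  | _, _, _, .node a i c ts qs _ q hq hc rs, r =>
      .node a (Function.update ts i (c.plug t)) qs q hq
        (fun j =>
          if h : j = i then
            cast (by subst h; rw [Function.update_self]) (CRun.glue hc r)
          else
            cast (congrArg (fun s => RunOf M s (qs j))
              (Function.update_of_ne h (c.plug t) ts).symm) (rs j h))

/-- Gluing runs over composed contexts. -/
def CRun.cglue {A : RankedAlphabet} {Q : Type} {M : WTA A Q} {d : Ctx A} {p : Q} :
    {c : Ctx A} → {q r : Q} → CRun M c q r → CRun M d p q → CRun M (c.comp d) p r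
  | _, _, _, .hole _, rd => rd
  | _, _, _, .node a i c ts qs _ r hq hc rs, rd =>
      .node a i (c.comp d) ts qs p r hq (hc.cglue rd) rs

/-- The `n`-fold iteration of a loop run over a context. -/
def CRun.pow {A : RankedAlphabet} {Q : Type} {M : WTA A Q} {m : Ctx A} {q : Q}
    (σ : CRun M m q q) : (n : ℕ) → CRun M (m.pow n) q q
  | 0 => .hole q
  | n + 1 => σ.cglue (σ.pow n)

/-- `x` is the weight of some accepting run of `M` over `t`
(weight of the run plus the final-state weight). -/
def AccWeight {A : RankedAlphabet} {Q : Type} (M : WTA A Q) (t : Term A) (x : ℝ) : Prop :=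
  ∃ (q : Q) (r : RunOf M t q), M.final q ∧ r.wt + M.fwt q = x

/-- `M` has some accepting run over `t`. -/
def HasAcc {A : RankedAlphabet} {Q : Type} (M : WTA A Q) (t : Term A) : Prop :=
  ∃ x, AccWeight M t x

/-- `f` is the max-plus semantics of `M`: `f t = ⊥` iff there is no accepting run,
and otherwise `f t` is the maximum weight of an accepting run. -/
def ComputesMax {A : RankedAlphabet} {Q : Type} (M : WTA A Q) (f : Term A → Option ℝ) : Prop :=
  ∀ t, (f t = none ↔ ¬ HasAcc M t) ∧
    ∀ x, f t = some x → AccWeight M t x ∧ ∀ y, AccWeight M t y → y ≤ x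

/-- `f` is the min-plus semantics of `M`. -/
def ComputesMin {A : RankedAlphabet} {Q : Type} (M : WTA A Q) (f : Term A → Option ℝ) : Prop :=
  ∀ t, (f t = none ↔ ¬ HasAcc M t) ∧
    ∀ x, f t = some x → AccWeight M t x ∧ ∀ y, AccWeight M t y → x ≤ y

/-- An automaton is unambiguous if every term has at most one accepting run. -/
def Unambiguous {A : RankedAlphabet} {Q : Type} (M : WTA A Q) : Prop :=
  ∀ (t : Term A) (q q' : Q) (r : RunOf M t q) (r' : RunOf M t q'),
    M.final q → M.final q' → q = q' ∧ HEq r r'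

/-- The order on `ℝ ∪ {⊥}` in which `⊥` is comparable only with itself. -/
def OLe : Option ℝ → Option ℝ → Prop
  | none, none => True
  | some x, some y => x ≤ y
  | _, _ => False

/-- Shifting a value of `ℝ ∪ {⊥}` by a real number. -/
def oshift (u : Option ℝ) (x : ℝ) : Option ℝ := u.map (· + x)

/-- The set of states reachable at the root by some run over `t`. -/
def reachSet {A : RankedAlphabet} {Q : Type} (M : WTA A Q) (t : Term A) : Set Q :=
  {q | Nonempty (RunOf M t q)}

/-- The set of states at the hole from which there is an accepting run over the context `c`. -/
def prodSet {A : RankedAlphabet} {Q : Type} (M : WTA A Q) (c : Ctx A) : Set Q :=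
  {p | ∃ q, M.final q ∧ Nonempty (CRun M c p q)}

section Bi
variable {A : RankedAlphabet} {Q1 Q2 : Type} (M1 : WTA A Q1) (M2 : WTA A Q2)

/-- Reachable states of the disjoint union of the two automata. -/
def biReach (t : Term A) : Set (Q1 ⊕ Q2) :=
  Sum.inl '' reachSet M1 t ∪ Sum.inr '' reachSet M2 t

/-- Productive states of the disjoint union of the two automata. -/
def biProd (c : Ctx A) : Set (Q1 ⊕ Q2) :=
  Sum.inl '' prodSet M1 c ∪ Sum.inr '' prodSet M2 c

/-- Final states of the disjoint union of the two automata. -/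
def biFinal : Set (Q1 ⊕ Q2) :=
  Sum.inl '' {q | M1.final q} ∪ Sum.inr '' {q | M2.final q}

/-- Transition relation of the disjoint union of the two automata. -/
def biTrans (a : A.symb) (qs : Fin (A.ar a) → Q1 ⊕ Q2) (q : Q1 ⊕ Q2) : Prop :=
  (∃ (qs' : Fin (A.ar a) → Q1) (q' : Q1),
      qs = Sum.inl ∘ qs' ∧ q = Sum.inl q' ∧ M1.trans a qs' q') ∨
  (∃ (qs' : Fin (A.ar a) → Q2) (q' : Q2),
      qs = Sum.inr ∘ qs' ∧ q = Sum.inr q' ∧ M2.trans a qs' q')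

/-- The family `Reachable` of sets of states of the form `Reach(t)`. -/
def ReachableSets : Set (Set (Q1 ⊕ Q2)) := {S | ∃ t, biReach M1 M2 t = S}

/-- The family `Productive` of sets of states of the form `Prod(c)`. -/
def ProductiveSets : Set (Set (Q1 ⊕ Q2)) := {S | ∃ c, biProd M1 M2 c = S}

/-- `t` refines `s` for `P` with shift `x`. -/
def Refines (P : Set (Q1 ⊕ Q2)) (t s : Term A) (x : ℝ) : Prop :=
  biReach M1 M2 s = biReach M1 M2 t ∧
  (∀ p : Q1, Sum.inl p ∈ P → ∀ ρ : RunOf M1 s p, ∃ ρ' : RunOf M1 t p, ρ.wt ≤ ρ'.wt + x) ∧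
  (∀ q : Q2, Sum.inr q ∈ P → ∀ τ : RunOf M2 s q, ∃ τ' : RunOf M2 t q, τ'.wt + x ≤ τ.wt)

end Bi

/-- Transitions of the product automaton `A_pro`, relative to a transition relation `Δ`. -/
def ProTrans {A : RankedAlphabet} {Q : Type}
    (Δ : ∀ a : A.symb, (Fin (A.ar a) → Q) → Q → Prop) (a : A.symb)
    (RPs : Fin (A.ar a) → Set Q × Set Q) (RP : Set Q × Set Q) : Prop :=
  RP.1 = {r | ∃ rs, Δ a rs r ∧ ∀ j, rs j ∈ (RPs j).1} ∧
  ∀ i, (RPs i).2 =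
    {ri | ∃ rs p, Δ a rs p ∧ rs i = ri ∧ (∀ j, j ≠ i → rs j ∈ (RPs j).1) ∧ p ∈ RP.2}

theorem RunOf.wt_cast {A : RankedAlphabet} {Q : Type} {M : WTA A Q} {t t' : Term A} {q : Q}
    (ht : t = t') (h : RunOf M t q = RunOf M t' q) (r : RunOf M t q) :
    (cast h r).wt = r.wt := by
  subst ht; rw [cast_eq]

theorem CRun.glue_wt {A : RankedAlphabet} {Q : Type} {M : WTA A Q} {t : Term A} :
    ∀ {c : Ctx A} {p q : Q} (σ : CRun M c p q) (r : RunOf M t p),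
      (σ.glue r).wt = σ.wt + r.wt
  | _, _, _, .hole _, r => by simp [CRun.glue, CRun.wt]; rfl
  | _, _, _, .node a i c ts qs p q hq hc rs, r => by
      have ih := CRun.glue_wt hc r
      show (∑ j, _) + M.wt a qs q = ((∑ j : {j // j ≠ i}, (rs j.1 j.2).wt) + M.wt a qs q + hc.wt) + r.wt
      set child : ∀ j, RunOf M (Function.update ts i (c.plug t) j) (qs j) := fun j =>
          if h : j = i then
            cast (by subst h; rw [Function.update_self]) (CRun.glue hc r)
          else
            cast (congrArg (fun s => RunOf M s (qs j))
              (Function.update_of_ne h (c.plug t) ts).symm) (rs j h) with hchild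
      have hi : (child i).wt = hc.wt + r.wt := by
        have hci : child i = cast (congrArg (fun s => RunOf M s (qs i))
            (Function.update_self i (c.plug t) ts).symm) (hc.glue r) := dif_pos rfl
        rw [hci, RunOf.wt_cast (Function.update_self i (c.plug t) ts).symm]
        exact ih
      set f : Fin (A.ar a) → ℝ := fun j => if h : j ≠ i then (rs j h).wt else 0 with hf
      have hj : ∀ j ∈ Finset.univ.erase i, (child j).wt = f j := by
        intro j hjmem
        have hne : j ≠ i := (Finset.mem_erase.mp hjmem).1
        rw [hchild, hf]; simp only [dif_neg hne, dif_pos hne]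
        exact RunOf.wt_cast (Function.update_of_ne hne (c.plug t) ts).symm _ _
      have hsplit : (∑ j, (child j).wt) = (child i).wt + ∑ j ∈ Finset.univ.erase i, (child j).wt :=
        (Finset.add_sum_erase _ _ (Finset.mem_univ i)).symm
      have hsub : (∑ j : {j // j ≠ i}, (rs j.1 j.2).wt) = ∑ j ∈ Finset.univ.erase i, f j := by
        have h1 : (∑ j : {j // j ≠ i}, (rs j.1 j.2).wt) = ∑ j : {j // j ≠ i}, f j.1 :=
          Finset.sum_congr rfl (fun j _ => by simp only [hf]; rw [dif_pos j.2])
        rw [h1, ← Finset.sum_subtype (Finset.univ.erase i)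
          (fun x => by simp [Finset.mem_erase]) f]
      rw [hsplit, hi, Finset.sum_congr rfl hj, hsub.symm]
      ring

theorem CRun.cglue_wt {A : RankedAlphabet} {Q : Type} {M : WTA A Q} {d : Ctx A} {p : Q} :
    ∀ {c : Ctx A} {q r : Q} (σ : CRun M c q r) (rd : CRun M d p q),
      (σ.cglue rd).wt = σ.wt + rd.wt
  | _, _, _, .hole _, rd => by simp [CRun.cglue, CRun.wt]; rfl
  | _, _, _, .node a i c ts qs q r hq hc rs, rd => by
      show _ + M.wt a qs r + (hc.cglue rd).wt = _ + M.wt a qs r + hc.wt + rd.wt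
      rw [CRun.cglue_wt hc rd]; ring

theorem CRun.pow_wt {A : RankedAlphabet} {Q : Type} {M : WTA A Q} {m : Ctx A} {q : Q}
    (σ : CRun M m q q) (n : ℕ) : (σ.pow n).wt = n * σ.wt := by
  induction n with
  | zero => simp [CRun.pow, CRun.wt]
  | succ k ih => show (σ.cglue (σ.pow k)).wt = _; rw [CRun.cglue_wt, ih]; push_cast; ring

/-- claim inside the pumping lemma: assuming `⟦A_max⟧ ≤ ⟦A_min⟧`, with
`P = Prod(c)` and `R = Reach(t)`, every max-plus loop run over `m` at a state of `P ∩ R`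
has weight at most that of every min-plus loop run over `m` at a state of `P ∩ R`. -/
theorem pumping_claim {A : RankedAlphabet} {Q1 Q2 : Type}
    [Fintype Q1] [Fintype Q2] (Mmax : WTA A Q1) (Mmin : WTA A Q2)
    (f g : Term A → Option ℝ)
    (hf : ComputesMax Mmax f) (hg : ComputesMin Mmin g)
    (hle : ∀ u, OLe (f u) (g u))
    (c : Ctx A) (t : Term A) (m : Ctx A)
    (p : Q1) (hp : Sum.inl p ∈ biProd Mmax Mmin c ∩ biReach Mmax Mmin t)
    (q : Q2) (hq : Sum.inr q ∈ biProd Mmax Mmin c ∩ biReach Mmax Mmin t)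
    (ρ : CRun Mmax m p p) (τ : CRun Mmin m q q) :
    ρ.wt ≤ τ.wt := by
  -- Extract the data from the membership hypotheses.
  obtain ⟨hpP, hpR⟩ := hp
  obtain ⟨hqP, hqR⟩ := hq
  have hpP' : p ∈ prodSet Mmax c := by
    rcases hpP with ⟨x, hx, hxe⟩ | ⟨x, hx, hxe⟩
    · rw [Sum.inl.injEq] at hxe; exact hxe ▸ hx
    · exact absurd hxe (by simp)
  have hpR' : p ∈ reachSet Mmax t := by
    rcases hpR with ⟨x, hx, hxe⟩ | ⟨x, hx, hxe⟩
    · rw [Sum.inl.injEq] at hxe; exact hxe ▸ hx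
    · exact absurd hxe (by simp)
  have hqP' : q ∈ prodSet Mmin c := by
    rcases hqP with ⟨x, hx, hxe⟩ | ⟨x, hx, hxe⟩
    · exact absurd hxe (by simp)
    · rw [Sum.inr.injEq] at hxe; exact hxe ▸ hx
  have hqR' : q ∈ reachSet Mmin t := by
    rcases hqR with ⟨x, hx, hxe⟩ | ⟨x, hx, hxe⟩
    · exact absurd hxe (by simp)
    · rw [Sum.inr.injEq] at hxe; exact hxe ▸ hx
  obtain ⟨fp, hfp, ⟨κ⟩⟩ := hpP'
  obtain ⟨rt⟩ := hpR'
  obtain ⟨fq, hfq, ⟨κ'⟩⟩ := hqP'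
  obtain ⟨st⟩ := hqR'
  -- For each n, the pumped term and the weight inequality.
  have key : ∀ n : ℕ,
      (κ.wt + (n * ρ.wt + rt.wt)) + Mmax.fwt fp ≤ (κ'.wt + (n * τ.wt + st.wt)) + Mmin.fwt fq := by
    intro n
    set u : Term A := c.plug ((m.pow n).plug t) with hu
    have hmax : AccWeight Mmax u ((κ.wt + (n * ρ.wt + rt.wt)) + Mmax.fwt fp) :=
      ⟨fp, κ.glue ((ρ.pow n).glue rt), hfp, by
        rw [CRun.glue_wt, CRun.glue_wt, CRun.pow_wt]⟩
    have hmin : AccWeight Mmin u ((κ'.wt + (n * τ.wt + st.wt)) + Mmin.fwt fq) :=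
      ⟨fq, κ'.glue ((τ.pow n).glue st), hfq, by
        rw [CRun.glue_wt, CRun.glue_wt, CRun.pow_wt]⟩
    have hfu : ∃ x, f u = some x := by
      rcases hx : f u with _ | x
      · exact absurd ((hf u).1.mp hx) (by exact fun h => h ⟨_, hmax⟩)
      · exact ⟨x, rfl⟩
    have hgu : ∃ y, g u = some y := by
      rcases hy : g u with _ | y
      · exact absurd ((hg u).1.mp hy) (by exact fun h => h ⟨_, hmin⟩)
      · exact ⟨y, rfl⟩
    obtain ⟨x, hx⟩ := hfu
    obtain ⟨y, hy⟩ := hgu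
    have hxy : x ≤ y := by have := hle u; rw [hx, hy] at this; exact this
    have h1 := ((hf u).2 x hx).2 _ hmax
    have h2 := ((hg u).2 y hy).2 _ hmin
    linarith
  -- Conclude by letting n grow.
  by_contra hcon
  push_neg at hcon
  have hd : 0 < ρ.wt - τ.wt := by linarith
  obtain ⟨n, hn⟩ := exists_nat_gt
      ((κ'.wt + st.wt + Mmin.fwt fq - (κ.wt + rt.wt + Mmax.fwt fp)) / (ρ.wt - τ.wt))
  have hn' : κ'.wt + st.wt + Mmin.fwt fq - (κ.wt + rt.wt + Mmax.fwt fp) < n * (ρ.wt - τ.wt) :=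
    (div_lt_iff₀ hd).mp hn
  have := key n
  nlinarith [this, hn']
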